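/- Suppose ‖φ(x,a)‖₂ ≤ R for all (x,a). For all ε > 0, the covering number of the softmax policy class Π(D_π) in the norm ‖π − π'‖_{∞,1} = max_x ∑_a |π(a|x) − π'(a|x)| satisfies log N(Π(D_π), ‖·‖_{∞,1}, ε) ≤ d log(1 + 2RD_π/ε). -/

import Mathlib

noncomputable section
open MeasureTheory Finset Matrix
open scoped BigOperators ENNReal

namespace Paper

variable {X A : Type*}

/-- Euclidean dot product on `Fin d → ℝ`. -/
def dotp {d : ℕ} (u v : Fin d → ℝ) : ℝ := ∑ i, u i * v i

/-- Euclidean norm on `Fin d → ℝ`. -/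
def nrm2 {d : ℕ} (u : Fin d → ℝ) : ℝ := Real.sqrt (∑ i, (u i) ^ 2)

/-- Squared weighted norm `uᵀ M u`. -/
def wnormSq {d : ℕ} (M : Matrix (Fin d) (Fin d) ℝ) (u : Fin d → ℝ) : ℝ := dotp u (M.mulVec u)

/-- Kullback–Leibler divergence between finitely supported distributions. -/
def KLdiv [Fintype A] (p q : A → ℝ) : ℝ := ∑ a, p a * Real.log (p a / q a)

/-- A stochastic policy. -/
def IsPolicy [Fintype A] (π : X → A → ℝ) : Prop :=
  (∀ x a, 0 ≤ π x a) ∧ (∀ x, ∑ a, π x a = 1)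

/-- A probability distribution over a finite set. -/
def IsDist [Fintype X] (ν : X → ℝ) : Prop := (∀ x, 0 ≤ ν x) ∧ ∑ x, ν x = 1

/-- A transition kernel. -/
def IsKernel [Fintype X] (p : X → A → X → ℝ) : Prop :=
  (∀ x a x', 0 ≤ p x a x') ∧ (∀ x a, ∑ x', p x a x' = 1)

/-- The softmax policy associated with parameter vector `θ`. -/
def softmax [Fintype A] {d : ℕ} (φ : X → A → Fin d → ℝ) (θ : Fin d → ℝ) (x : X) (a : A) : ℝ :=
  Real.exp (dotp (φ x a) θ) / ∑ a', Real.exp (dotp (φ x a') θ)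

/-- State-action distribution at step `k` of the process started from `ν₀` and following `π`. -/
def trajDist [Fintype X] [Fintype A] (p : X → A → X → ℝ) (ν₀ : X → ℝ) (π : X → A → ℝ) :
    ℕ → X → A → ℝ
  | 0 => fun x a => ν₀ x * π x a
  | k + 1 => fun x a => (∑ x', ∑ a', trajDist p ν₀ π k x' a' * p x' a' x) * π x a

/-- Normalized discounted state-action occupancy measure of policy `π`. -/
def occupancy [Fintype X] [Fintype A] (γ : ℝ) (p : X → A → X → ℝ) (ν₀ : X → ℝ)
    (π : X → A → ℝ) (x : X) (a : A) : ℝ :=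
  (1 - γ) * ∑' k : ℕ, γ ^ k * trajDist p ν₀ π k x a

/-- `k`-step state transition kernel of the Markov chain induced by policy `π`. -/
def kernelPow [Fintype X] [Fintype A] [DecidableEq X] (p : X → A → X → ℝ) (π : X → A → ℝ) :
    ℕ → X → X → ℝ
  | 0 => fun x y => if x = y then 1 else 0
  | k + 1 => fun x y => ∑ z, kernelPow p π k x z * ∑ a, π z a * p z a y

/-- The value function of policy `π`. -/
def vval [Fintype X] [Fintype A] [DecidableEq X] (γ : ℝ) (r : X → A → ℝ) (p : X → A → X → ℝ)
    (π : X → A → ℝ) (x : X) : ℝ :=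
  ∑' k : ℕ, γ ^ k * ∑ y, kernelPow p π k x y * ∑ a, π y a * r y a

/-- The action-value function of policy `π`. -/
def qval [Fintype X] [Fintype A] [DecidableEq X] (γ : ℝ) (r : X → A → ℝ) (p : X → A → X → ℝ)
    (π : X → A → ℝ) (x : X) (a : A) : ℝ :=
  r x a + γ * ∑ x', p x a x' * vval γ r p π x'

/-- The normalized discounted return of policy `π`. -/
def ret [Fintype X] [Fintype A] (γ : ℝ) (p : X → A → X → ℝ) (ν₀ : X → ℝ) (r : X → A → ℝ)
    (π : X → A → ℝ) : ℝ := ∑ x, ∑ a, occupancy γ p ν₀ π x a * r x a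

/-- The parametrized value-function candidate `v_{θ,π}`. -/
def vparam [Fintype A] {d : ℕ} (φ : X → A → Fin d → ℝ) (θ : Fin d → ℝ) (π : X → A → ℝ)
    (x : X) : ℝ := ∑ a, π x a * dotp θ (φ x a)

/-- `Ψ v`, where `Ψ` is the matrix with columns `ψ x`. -/
def psiApply [Fintype X] {d : ℕ} (ψ : X → Fin d → ℝ) (v : X → ℝ) : Fin d → ℝ :=
  ∑ x, v x • ψ x

/-- `Φᵀ μ`, the feature occupancy of a state-action measure `μ`. -/
def featOcc [Fintype X] [Fintype A] {d : ℕ} (φ : X → A → Fin d → ℝ) (μ : X → A → ℝ) :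
    Fin d → ℝ := ∑ x, ∑ a, μ x a • φ x a

/-- The parametrized occupancy candidate `μ_{λ,π}` built from columns `ψh`. -/
def muOf [Fintype X] {d : ℕ} (γ : ℝ) (ν₀ : X → ℝ) (ψh : X → Fin d → ℝ) (lam : Fin d → ℝ)
    (π : X → A → ℝ) (x : X) (a : A) : ℝ :=
  π x a * ((1 - γ) * ν₀ x + γ * dotp (ψh x) lam)

/-- The reduced Lagrangian `f(λ, π; θ)`. -/
def lag [Fintype X] [Fintype A] {d : ℕ} (γ : ℝ) (ν₀ : X → ℝ) (omg : Fin d → ℝ)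
    (ψ : X → Fin d → ℝ) (φ : X → A → Fin d → ℝ) (lam θv : Fin d → ℝ) (π : X → A → ℝ) : ℝ :=
  (1 - γ) * ∑ x, ν₀ x * vparam φ θv π x
    + dotp lam (omg + γ • psiApply ψ (vparam φ θv π) - θv)

/-- The regularized empirical covariance matrix `Λ̂`. -/
def covMat {d n : ℕ} (β : ℝ) (φi : Fin n → Fin d → ℝ) : Matrix (Fin d) (Fin d) ℝ :=
  β • (1 : Matrix (Fin d) (Fin d) ℝ) + (n : ℝ)⁻¹ • ∑ i, vecMulVec (φi i) (φi i)

/-- `Ψ̂ v`, where `Ψ̂` is the least-squares estimator of `Ψ`. -/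
def psiHatApply {X : Type*} {d n : ℕ} (β : ℝ) (φi : Fin n → Fin d → ℝ)
    (xs : Fin n → X) (v : X → ℝ) : Fin d → ℝ :=
  (covMat β φi)⁻¹.mulVec ((n : ℝ)⁻¹ • ∑ i, v (xs i) • φi i)

/-- `ψ̂ x`, the column of the least-squares estimator `Ψ̂` at state `x`. -/
def psiHatCol {X : Type*} [DecidableEq X] {d n : ℕ} (β : ℝ) (φi : Fin n → Fin d → ℝ)
    (xs : Fin n → X) (x : X) : Fin d → ℝ :=
  (covMat β φi)⁻¹.mulVec ((n : ℝ)⁻¹ • ∑ i, (if xs i = x then (1 : ℝ) else 0) • φi i)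


section Aux
open Metric

lemma sep_card {d : ℕ} {D δ : ℝ} (hD : 0 ≤ D) (hδ : 0 < δ)
    (T : Finset (EuclideanSpace ℝ (Fin d)))
    (hT : ∀ t ∈ T, ‖t‖ ≤ D)
    (hsep : ∀ s ∈ T, ∀ t ∈ T, s ≠ t → δ < ‖s - t‖) :
    (T.card : ℝ) ≤ (1 + 2 * D / δ) ^ d := by
  rcases Nat.eq_zero_or_pos d with hd | hd
  · subst hd
    simp only [pow_zero]
    exact_mod_cast Finset.card_le_one.mpr (fun a _ b _ => Subsingleton.elim a b)
  haveI : Nonempty (Fin d) := Fin.pos_iff_nonempty.mp hd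
  set v : ℝ≥0∞ := ENNReal.ofReal (Real.sqrt Real.pi ^ d / Real.Gamma (d / 2 + 1)) with hv
  have hvol : ∀ (x : EuclideanSpace ℝ (Fin d)) (r : ℝ),
      volume (ball x r) = ENNReal.ofReal r ^ d * v := by
    intro x r
    rw [EuclideanSpace.volume_ball, Fintype.card_fin]
  have hvpos : 0 < volume (ball (0 : EuclideanSpace ℝ (Fin d)) 1) :=
    measure_ball_pos _ _ one_pos
  have hvpos' : 0 < v := by rw [hvol 0 1] at hvpos; simpa using hvpos
  have hvtop : v ≠ ⊤ := ENNReal.ofReal_ne_top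
  have hdisj : (T : Set (EuclideanSpace ℝ (Fin d))).PairwiseDisjoint
      (fun t => ball t (δ / 2)) := by
    intro s hs t ht hst
    refine Set.disjoint_left.mpr (fun z hzs hzt => ?_)
    have h1 : dist z s < δ / 2 := mem_ball.mp hzs
    have h2 : dist z t < δ / 2 := mem_ball.mp hzt
    have h3 := hsep s hs t ht hst
    rw [← dist_eq_norm] at h3
    have h4 : dist s t ≤ dist z s + dist z t := dist_triangle_left s t z
    linarith
  have hsub : ∀ t ∈ T, ball t (δ / 2) ⊆ ball (0 : EuclideanSpace ℝ (Fin d)) (D + δ / 2) := by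
    intro t ht z hz
    have h1 : dist z t < δ / 2 := mem_ball.mp hz
    have h2 : ‖t‖ ≤ D := hT t ht
    have h3 : dist z 0 ≤ dist z t + dist t 0 := dist_triangle z t 0
    rw [dist_zero_right] at h3
    refine mem_ball.mpr ?_
    rw [dist_zero_right] at h3 ⊢
    linarith
  have hmeas : ((T.card : ℝ≥0∞) * ENNReal.ofReal (δ / 2) ^ d) * v
      ≤ ENNReal.ofReal (D + δ / 2) ^ d * v := by
    calc ((T.card : ℝ≥0∞) * ENNReal.ofReal (δ / 2) ^ d) * v
        = ∑ t ∈ T, volume (ball t (δ / 2)) := by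
          rw [Finset.sum_congr rfl (fun t _ => hvol t (δ / 2)), Finset.sum_const, nsmul_eq_mul,
            mul_assoc]
      _ = volume (⋃ t ∈ T, ball t (δ / 2)) :=
          (measure_biUnion_finset hdisj (fun t _ => measurableSet_ball)).symm
      _ ≤ volume (ball (0 : EuclideanSpace ℝ (Fin d)) (D + δ / 2)) :=
          measure_mono (Set.iUnion₂_subset hsub)
      _ = ENNReal.ofReal (D + δ / 2) ^ d * v := hvol _ _
  have hmeas2 : (T.card : ℝ≥0∞) * ENNReal.ofReal (δ / 2) ^ d
      ≤ ENNReal.ofReal (D + δ / 2) ^ d :=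
    (ENNReal.mul_le_mul_iff_left hvpos'.ne' hvtop).mp hmeas
  have hδ2 : (0:ℝ) ≤ δ / 2 := by linarith
  have hD2 : (0:ℝ) ≤ D + δ / 2 := by linarith
  rw [← ENNReal.ofReal_pow hδ2, ← ENNReal.ofReal_pow hD2,
    ← ENNReal.ofReal_natCast, ← ENNReal.ofReal_mul (by positivity)] at hmeas2
  have hreal : (T.card : ℝ) * (δ / 2) ^ d ≤ (D + δ / 2) ^ d :=
    (ENNReal.ofReal_le_ofReal_iff (by positivity)).mp hmeas2
  have hpow : (0:ℝ) < (δ / 2) ^ d := by positivity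
  rw [← le_div_iff₀ hpow] at hreal
  calc (T.card : ℝ) ≤ (D + δ / 2) ^ d / (δ / 2) ^ d := hreal
    _ = ((D + δ / 2) / (δ / 2)) ^ d := (div_pow _ _ _).symm
    _ = (1 + 2 * D / δ) ^ d := by congr 1; field_simp; ring

lemma ball_cover {d : ℕ} {D δ : ℝ} (hD : 0 ≤ D) (hδ : 0 < δ) :
    ∃ T : Finset (EuclideanSpace ℝ (Fin d)),
      (∀ t ∈ T, ‖t‖ ≤ D) ∧
      (∀ y : EuclideanSpace ℝ (Fin d), ‖y‖ ≤ D → ∃ t ∈ T, ‖y - t‖ ≤ δ) ∧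
      (T.card : ℝ) ≤ (1 + 2 * D / δ) ^ d := by
  classical
  set P : ℕ → Prop := fun n => ∃ T : Finset (EuclideanSpace ℝ (Fin d)),
    (∀ t ∈ T, ‖t‖ ≤ D) ∧ (∀ s ∈ T, ∀ t ∈ T, s ≠ t → δ < ‖s - t‖) ∧ T.card = n with hP
  have hP0 : P 0 := ⟨∅, by simp, by simp, rfl⟩
  set N : ℕ := ⌈(1 + 2 * D / δ) ^ d⌉₊ with hN
  have hPle : ∀ n, P n → n ≤ N := by
    rintro n ⟨T, hT1, hT2, rfl⟩
    have h1 : (T.card : ℝ) ≤ (1 + 2 * D / δ) ^ d := sep_card hD hδ T hT1 hT2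
    have h2 : (T.card : ℝ) ≤ (N : ℝ) := h1.trans (Nat.le_ceil _)
    exact_mod_cast h2
  have hPm : P (Nat.findGreatest P N) := Nat.findGreatest_spec (Nat.zero_le _) hP0
  obtain ⟨T, hT1, hT2, hTcard⟩ := hPm
  refine ⟨T, hT1, ?_, ?_⟩
  · intro y hy
    by_contra hcon
    push_neg at hcon
    have hyT : y ∉ T := fun h => by
      have := hcon y h; simp at this; linarith
    have hins : P (T.card + 1) := by
      refine ⟨insert y T, ?_, ?_, by rw [Finset.card_insert_of_notMem hyT]⟩
      · intro t ht
        rcases Finset.mem_insert.mp ht with rfl | ht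
        · exact hy
        · exact hT1 t ht
      · intro s hs t ht hst
        rcases Finset.mem_insert.mp hs with hs' | hs'
        · rcases Finset.mem_insert.mp ht with ht' | ht'
          · exact absurd (hs'.trans ht'.symm) hst
          · rw [hs']; exact hcon t ht'
        · rcases Finset.mem_insert.mp ht with ht' | ht'
          · rw [ht', norm_sub_rev]; exact hcon s hs'
          · exact hT2 s hs' t ht' hst
    have hlt : Nat.findGreatest P N < T.card + 1 := by omega
    exact Nat.findGreatest_is_greatest hlt (hPle _ hins) hins
  · calc (T.card : ℝ) ≤ (1 + 2 * D / δ) ^ d := sep_card hD hδ T hT1 hT2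

lemma mad_le {A : Type*} [Fintype A] (p w : A → ℝ) {K : ℝ}
    (hp : ∀ a, 0 ≤ p a) (hp1 : ∑ a, p a = 1) (hw : ∀ a, |w a| ≤ K) :
    ∑ a, p a * |w a - ∑ b, p b * w b| ≤ K := by
  classical
  set S : ℝ := ∑ b, p b * w b with hS
  have hK0 : 0 ≤ K := by
    by_contra h
    push_neg at h
    have : ∃ a : A, True := by
      by_contra hA
      push_neg at hA
      have : ∑ a, p a = 0 := Finset.sum_eq_zero (fun a _ => (hA a).elim)
      rw [hp1] at this; norm_num at this
    obtain ⟨a, _⟩ := this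
    linarith [abs_nonneg (w a), hw a]
  have hSK : |S| ≤ K := by
    rw [hS, abs_le]
    constructor
    · calc -K = ∑ b, p b * (-K) := by rw [← Finset.sum_mul, hp1]; ring
        _ ≤ ∑ b, p b * w b := Finset.sum_le_sum (fun b _ => by
            have := (abs_le.mp (hw b)).1
            exact mul_le_mul_of_nonneg_left this (hp b))
    · calc ∑ b, p b * w b ≤ ∑ b, p b * K := Finset.sum_le_sum (fun b _ => by
            have := (abs_le.mp (hw b)).2
            exact mul_le_mul_of_nonneg_left this (hp b))
        _ = K := by rw [← Finset.sum_mul, hp1]; ring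
  set X : ℝ := ∑ a, p a * max (w a - S) 0 with hX
  set Y : ℝ := ∑ a, p a * max (S - w a) 0 with hY
  set P : ℝ := ∑ a, p a * (if S < w a then (1:ℝ) else 0) with hPdef
  have hXY : X - Y = 0 := by
    rw [hX, hY, ← Finset.sum_sub_distrib]
    have : ∀ a ∈ univ, p a * max (w a - S) 0 - p a * max (S - w a) 0 = p a * w a - p a * S := by
      intro a _
      rcases le_total (w a) S with h | h
      · rw [max_eq_right (by linarith), max_eq_left (by linarith)]; ring
      · rw [max_eq_left (by linarith), max_eq_right (by linarith)]; ring
    rw [Finset.sum_congr rfl this, Finset.sum_sub_distrib, ← hS]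
    have : ∑ a, p a * S = S := by rw [← Finset.sum_mul, hp1, one_mul]
    rw [this]; ring
  have habs : ∑ a, p a * |w a - S| = X + Y := by
    rw [hX, hY, ← Finset.sum_add_distrib]
    refine Finset.sum_congr rfl (fun a _ => ?_)
    rw [← mul_add]
    congr 1
    rcases le_total (w a) S with h | h
    · rw [abs_of_nonpos (by linarith), max_eq_right (by linarith), max_eq_left (by linarith)]; ring
    · rw [abs_of_nonneg (by linarith), max_eq_left (by linarith), max_eq_right (by linarith)]; ring
  have hX0 : 0 ≤ X := Finset.sum_nonneg (fun a _ => mul_nonneg (hp a) (le_max_right _ _))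
  have hY0 : 0 ≤ Y := Finset.sum_nonneg (fun a _ => mul_nonneg (hp a) (le_max_right _ _))
  have hP0 : 0 ≤ P := Finset.sum_nonneg (fun a _ => mul_nonneg (hp a) (by positivity))
  have hP1 : P ≤ 1 := by
    have h1 : P ≤ ∑ a, p a := by
      refine Finset.sum_le_sum (fun a _ => ?_)
      by_cases h : S < w a <;> simp [h, hp a]
    rw [hp1] at h1
    exact h1
  have hXP : X ≤ (K - S) * P := by
    rw [hX, hPdef, Finset.mul_sum]
    refine Finset.sum_le_sum (fun a _ => ?_)
    by_cases h : S < w a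
    · rw [if_pos h, max_eq_left (by linarith), mul_one]
      have := (abs_le.mp (hw a)).2
      nlinarith [hp a]
    · push_neg at h
      rw [if_neg (not_lt.mpr h), max_eq_right (by linarith)]
      simp
  have hYP : Y ≤ (K + S) * (1 - P) := by
    have h1P : 1 - P = ∑ a, p a * (if S < w a then (0:ℝ) else 1) := by
      have h2 : (∑ a, p a) - P = ∑ a, (p a - p a * (if S < w a then (1:ℝ) else 0)) := by
        rw [Finset.sum_sub_distrib, hPdef]
      rw [hp1] at h2
      rw [h2]
      refine Finset.sum_congr rfl (fun a _ => ?_)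
      by_cases h : S < w a <;> simp [h]
    rw [hY, h1P, Finset.mul_sum]
    refine Finset.sum_le_sum (fun a _ => ?_)
    by_cases h : S < w a
    · rw [if_pos h, max_eq_right (by linarith), mul_zero, mul_zero]
    · push_neg at h
      rw [if_neg (not_lt.mpr h), max_eq_left (by linarith), mul_one]
      have := (abs_le.mp (hw a)).1
      nlinarith [hp a]
  -- conclude 2X ≤ K hence X + Y = 2X ≤ K
  have hXeqY : X = Y := by linarith
  have hKS1 : 0 ≤ K - S := by have := (abs_le.mp hSK).2; linarith
  have hKS2 : 0 ≤ K + S := by have := (abs_le.mp hSK).1; linarith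
  have hsq : X * X ≤ (K * K - S * S) * (P * (1 - P)) := by nlinarith [hXeqY ▸ hXP, hYP]
  have h4P : P * (1 - P) ≤ 1 / 4 := by nlinarith [sq_nonneg (2 * P - 1)]
  have hXK : X * X ≤ (K / 2) * (K / 2) := by
    nlinarith [mul_nonneg hP0 (by linarith : (0:ℝ) ≤ 1 - P), mul_nonneg hKS1 hKS2, sq_nonneg S]
  have : X ≤ K / 2 := by nlinarith [hXK, hX0, hK0]
  linarith [habs, hXeqY]

lemma softmax_l1_lip {A : Type*} [Fintype A] [Nonempty A] (u w : A → ℝ) {K : ℝ}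
    (hK : ∀ a, |w a| ≤ K) :
    ∑ a, |Real.exp (u a + w a) / (∑ b, Real.exp (u b + w b))
          - Real.exp (u a) / (∑ b, Real.exp (u b))| ≤ K := by
  classical
  set g : A → ℝ → ℝ := fun a t => Real.exp (u a + t * w a) with hg
  set Z : ℝ → ℝ := fun t => ∑ b, g b t with hZ
  have hgpos : ∀ a t, 0 < g a t := fun a t => Real.exp_pos _
  have hZpos : ∀ t, 0 < Z t := fun t => Finset.sum_pos (fun b _ => hgpos b t) univ_nonempty
  set p : A → ℝ → ℝ := fun a t => g a t / Z t with hp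
  have hK0 : 0 ≤ K := le_trans (abs_nonneg _) (hK (Classical.arbitrary A))
  -- derivatives
  have hgd : ∀ a t, HasDerivAt (g a) (g a t * w a) t := by
    intro a t
    have h1 : HasDerivAt (fun t : ℝ => u a + t * w a) (w a) t := by
      simpa using (hasDerivAt_mul_const (w a)).const_add (u a)
    simpa [hg] using h1.exp
  have hZd : ∀ t, HasDerivAt Z (∑ b, g b t * w b) t := fun t =>
    HasDerivAt.fun_sum (fun b _ => hgd b t)
  have hpd : ∀ a t, HasDerivAt (p a)
      (p a t * w a - p a t * ((∑ b, g b t * w b) / Z t)) t := by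
    intro a t
    have h : HasDerivAt (fun y => g a y / Z y)
        ((g a t * w a * Z t - g a t * ∑ b, g b t * w b) / Z t ^ 2) t :=
      (hgd a t).div (hZd t) (hZpos t).ne'
    convert h using 1
    have hZ0 := (hZpos t).ne'
    show g a t / Z t * w a - g a t / Z t * ((∑ b, g b t * w b) / Z t) = _
    field_simp
  -- sum of p's is 1
  have hpsum : ∀ t, ∑ a, p a t = 1 := by
    intro t
    rw [hp]
    simp only
    rw [← Finset.sum_div]
    exact div_self (hZpos t).ne'
  -- derivative bound via mean absolute deviation
  have hpd_bound : ∀ t, ∑ a, |p a t * w a - p a t * ((∑ b, g b t * w b) / Z t)| ≤ K := by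
    intro t
    have hppos : ∀ a, 0 ≤ p a t := fun a => le_of_lt (div_pos (hgpos a t) (hZpos t))
    have hSeq : (∑ b, g b t * w b) / Z t = ∑ b, p b t * w b := by
      rw [Finset.sum_div]
      refine Finset.sum_congr rfl (fun b _ => ?_)
      rw [hp]
      ring
    calc ∑ a, |p a t * w a - p a t * ((∑ b, g b t * w b) / Z t)|
        = ∑ a, p a t * |w a - ∑ b, p b t * w b| := by
          refine Finset.sum_congr rfl (fun a _ => ?_)
          rw [hSeq, ← mul_sub, abs_mul, abs_of_nonneg (hppos a)]
      _ ≤ K := mad_le (fun a => p a t) w hppos (hpsum t) hK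
  -- signs
  set ε : A → ℝ := fun a => if p a 0 ≤ p a 1 then 1 else -1 with hε
  set F : ℝ → ℝ := fun t => ∑ a, ε a * p a t with hF
  set F' : ℝ → ℝ := fun t => ∑ a, ε a * (p a t * w a - p a t * ((∑ b, g b t * w b) / Z t)) with hF'
  have hFd : ∀ t, HasDerivAt F (F' t) t := fun t =>
    HasDerivAt.fun_sum (fun a _ => (hpd a t).const_mul (ε a))
  have hF'bound : ∀ t, |F' t| ≤ K := by
    intro t
    calc |F' t| ≤ ∑ a, |ε a * (p a t * w a - p a t * ((∑ b, g b t * w b) / Z t))| :=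
          Finset.abs_sum_le_sum_abs _ _
      _ = ∑ a, |p a t * w a - p a t * ((∑ b, g b t * w b) / Z t)| := by
          refine Finset.sum_congr rfl (fun a _ => ?_)
          rw [abs_mul]
          have : |ε a| = 1 := by rw [hε]; by_cases h : p a 0 ≤ p a 1 <;> simp [h]
          rw [this, one_mul]
      _ ≤ K := hpd_bound t
  -- MVT
  obtain ⟨c, _, hc⟩ := exists_hasDerivAt_eq_slope F F' one_pos
    (fun x _ => ((hFd x).continuousAt.continuousWithinAt))
    (fun x _ => hFd x)
  have hslope : F 1 - F 0 = F' c := by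
    rw [hc]; ring
  have key : ∑ a, |p a 1 - p a 0| = F 1 - F 0 := by
    rw [hF]
    simp only
    rw [← Finset.sum_sub_distrib]
    refine Finset.sum_congr rfl (fun a _ => ?_)
    rw [← mul_sub]
    by_cases h : p a 0 ≤ p a 1
    · have hεa : ε a = 1 := if_pos h
      rw [hεa, one_mul, abs_of_nonneg (by linarith)]
    · have hεa : ε a = -1 := if_neg h
      rw [hεa, neg_one_mul, abs_of_neg (by linarith), neg_sub]
  have final : ∑ a, |p a 1 - p a 0| ≤ K := by
    rw [key, hslope]
    exact le_trans (le_abs_self _) (hF'bound c)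
  have hsimp : ∀ a, p a 1 = Real.exp (u a + w a) / (∑ b, Real.exp (u b + w b)) ∧
      p a 0 = Real.exp (u a) / (∑ b, Real.exp (u b)) := by
    intro a
    constructor <;> simp [hp, hg, hZ]
  calc ∑ a, |Real.exp (u a + w a) / (∑ b, Real.exp (u b + w b))
          - Real.exp (u a) / (∑ b, Real.exp (u b))|
      = ∑ a, |p a 1 - p a 0| := by
        refine Finset.sum_congr rfl (fun a _ => ?_)
        rw [(hsimp a).1, (hsimp a).2]
    _ ≤ K := final
end Aux

lemma nrm2_eq_norm {d : ℕ} (y : EuclideanSpace ℝ (Fin d)) : nrm2 (fun i => y i) = ‖y‖ := by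
  rw [EuclideanSpace.norm_eq, nrm2]
  congr 1
  exact Finset.sum_congr rfl (fun i _ => by rw [Real.norm_eq_abs, sq_abs])

lemma dotp_cs {d : ℕ} (u v : Fin d → ℝ) : |dotp u v| ≤ nrm2 u * nrm2 v := by
  have h := Finset.sum_mul_sq_le_sq_mul_sq Finset.univ u v
  calc |dotp u v| = Real.sqrt ((∑ i, u i * v i) ^ 2) := by
        rw [Real.sqrt_sq_eq_abs, dotp]
    _ ≤ Real.sqrt ((∑ i, u i ^ 2) * (∑ i, v i ^ 2)) := Real.sqrt_le_sqrt h
    _ = nrm2 u * nrm2 v := by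
        rw [nrm2, nrm2, Real.sqrt_mul (Finset.sum_nonneg (fun i _ => sq_nonneg _))]

lemma dotp_sub {d : ℕ} (v θ θ' : Fin d → ℝ) :
    dotp v θ - dotp v θ' = dotp v (fun i => θ i - θ' i) := by
  rw [dotp, dotp, dotp, ← Finset.sum_sub_distrib]
  exact Finset.sum_congr rfl (fun i _ => by ring)


/-- covering number of the softmax policy class `Π(D_π)` in the
`‖·‖_{∞,1}` norm: `log N(Π(D_π), ‖·‖_{∞,1}, ε) ≤ d log(1 + 2RD_π/ε)`, expressed as the
existence of an internal `ε`-cover of cardinality at most `(1 + 2RD_π/ε)^d`. -/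

theorem statement17 {X A : Type*} [Fintype X] [Fintype A] [Nonempty X] [Nonempty A] {d : ℕ}
    (R Dπ ε : ℝ) (hε : 0 < ε) (hDπ : 0 ≤ Dπ)
    (φ : X → A → Fin d → ℝ) (hφ : ∀ x a, nrm2 (φ x a) ≤ R) :
    ∃ C : Finset (X → A → ℝ),
      (∀ c ∈ C, ∃ θc : Fin d → ℝ, nrm2 θc ≤ Dπ ∧ c = softmax φ θc) ∧
      (∀ θ : Fin d → ℝ, nrm2 θ ≤ Dπ →
        ∃ c ∈ C, ∀ x, ∑ a, |softmax φ θ x a - c x a| ≤ ε) ∧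
      (C.card : ℝ) ≤ (1 + 2 * R * Dπ / ε) ^ d := by
  classical
  have hR0 : 0 ≤ R := le_trans (Real.sqrt_nonneg _)
    (hφ (Classical.arbitrary X) (Classical.arbitrary A))
  rcases eq_or_lt_of_le hR0 with hR | hR
  · -- degenerate case R = 0 : all features vanish
    have hφ0 : ∀ x a (θ : Fin d → ℝ), dotp (φ x a) θ = 0 := by
      intro x a θ
      have h1 : nrm2 (φ x a) = 0 := le_antisymm (hR ▸ hφ x a) (Real.sqrt_nonneg _)
      have h2 : ∑ i, (φ x a i) ^ 2 = 0 := by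
        rw [nrm2] at h1
        have := le_antisymm (Real.sqrt_eq_zero'.mp h1) (Finset.sum_nonneg (fun i _ => sq_nonneg _))
        exact this
      have h3 : ∀ i, φ x a i = 0 := by
        intro i
        have := (Finset.sum_eq_zero_iff_of_nonneg (fun i _ => sq_nonneg (φ x a i))).mp h2 i
          (Finset.mem_univ i)
        exact pow_eq_zero_iff (n := 2) (by norm_num) |>.mp this
      rw [dotp]
      exact Finset.sum_eq_zero (fun i _ => by rw [h3 i, zero_mul])
    have hconst : ∀ θ : Fin d → ℝ, softmax φ θ = softmax φ (fun _ => 0) := by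
      intro θ
      funext x a
      rw [softmax, softmax, hφ0 x a θ, hφ0 x a (fun _ => 0)]
      congr 1
      exact Finset.sum_congr rfl (fun a' _ => by rw [hφ0 x a' θ, hφ0 x a' (fun _ => 0)])
    refine ⟨{softmax φ (fun _ => 0)}, ?_, ?_, ?_⟩
    · intro c hc
      rw [Finset.mem_singleton] at hc
      refine ⟨fun _ => 0, ?_, hc⟩
      simpa [nrm2] using hDπ
    · intro θ hθ
      refine ⟨softmax φ (fun _ => 0), Finset.mem_singleton_self _, fun x => ?_⟩
      rw [hconst θ]
      simp [le_of_lt hε]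
    · rw [Finset.card_singleton, ← hR]
      have : 2 * (0:ℝ) * Dπ / ε = 0 := by ring
      rw [this, add_zero, one_pow, Nat.cast_one]
  · -- main case R > 0
    set δ : ℝ := ε / R with hδdef
    have hδ : 0 < δ := div_pos hε hR
    obtain ⟨T, hT1, hT2, hT3⟩ := ball_cover (d := d) hDπ hδ
    refine ⟨T.image (fun t => softmax φ (fun i => t i)), ?_, ?_, ?_⟩
    · intro c hc
      obtain ⟨t, ht, rfl⟩ := Finset.mem_image.mp hc
      exact ⟨fun i => t i, (nrm2_eq_norm t) ▸ hT1 t ht, rfl⟩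
    · intro θ hθ
      set yθ : EuclideanSpace ℝ (Fin d) := (WithLp.equiv 2 (Fin d → ℝ)).symm θ with hyθ
      have hyθn : ‖yθ‖ ≤ Dπ := by
        have : nrm2 (fun i => yθ i) = ‖yθ‖ := nrm2_eq_norm yθ
        rw [← this]
        exact hθ
      obtain ⟨t, ht, hdist⟩ := hT2 yθ hyθn
      refine ⟨softmax φ (fun i => t i), Finset.mem_image_of_mem _ ht, fun x => ?_⟩
      have hw : ∀ a, |dotp (φ x a) θ - dotp (φ x a) (fun i => t i)| ≤ ε := by
        intro a
        rw [dotp_sub]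
        calc |dotp (φ x a) (fun i => θ i - t i)|
            ≤ nrm2 (φ x a) * nrm2 (fun i => θ i - t i) := dotp_cs _ _
          _ = nrm2 (φ x a) * ‖yθ - t‖ := by
              congr 1
              have : (fun i => θ i - t i) = (fun i => (yθ - t) i) := by
                funext i
                rfl
              rw [this]
              exact nrm2_eq_norm (yθ - t)
          _ ≤ R * δ := by
              refine mul_le_mul (hφ x a) hdist (norm_nonneg _) hR0
          _ = ε := by
              rw [hδdef]
              field_simp
      have h := softmax_l1_lip (fun a => dotp (φ x a) (fun i => t i))
        (fun a => dotp (φ x a) θ - dotp (φ x a) (fun i => t i)) hw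
      have hsum : ∀ a : A, dotp (φ x a) (fun i => t i)
          + (dotp (φ x a) θ - dotp (φ x a) (fun i => t i)) = dotp (φ x a) θ := fun a => by ring
      simp only [hsum] at h
      simpa [softmax] using h
    · calc ((T.image (fun t => softmax φ (fun i => t i))).card : ℝ)
          ≤ (T.card : ℝ) := by exact_mod_cast Finset.card_image_le
        _ ≤ (1 + 2 * Dπ / δ) ^ d := hT3
        _ = (1 + 2 * R * Dπ / ε) ^ d := by
            congr 2
            rw [hδdef]
            field_simp

end Paper
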